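/- If pqs(n,cs,us,ds) is in the correctness specification S_pqs with n > 0 and cs a list of length n, then cs is a list of the distinct numbers 1,…,n (a permutation of 1,…,n) solving the n queens problem: the up diagonal numbers j+k and down diagonal numbers k−j of the queens (queen j at position k) are pairwise distinct. -/

import Mathlib

/-- Ground terms of the Herbrand universe: numerals built from `zero`/`succ`,
list constructors `cons`/`nil`, and infinitely many other constants `sym n`. -/
inductive Term : Type
  | zero : Term
  | succ : Term → Term
  | cons : Term → Term → Term
  | nil  : Term
  | sym  : ℕ → Term
deriving DecidableEq

/-- The numeral `sⁱ(0)` representing a natural number. -/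
def num : ℕ → Term
  | 0 => Term.zero
  | n + 1 => Term.succ (num n)

/-- `NthMember k e t` : `e` is the `k`-th member (k ≥ 1) of the term `t`,
i.e. `t = [e₁,…,e_{k-1}, e | t']`. -/
def NthMember : ℕ → Term → Term → Prop
  | 0, _, _ => False
  | 1, e, t => ∃ r, t = Term.cons e r
  | k + 2, e, t => ∃ h r, t = Term.cons h r ∧ NthMember (k + 1) e r

/-- `e` is a member of the term `t`. -/
def IsMember (e t : Term) : Prop := ∃ k, NthMember k e t

/-- `t` is a (proper, nil-terminated) list. -/
inductive IsList : Term → Prop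
  | nil : IsList Term.nil
  | cons (h t : Term) : IsList t → IsList (Term.cons h t)

/-- The members of `cs` are pairwise distinct (no member occurs at two positions). -/
def DistinctMembers (cs : Term) : Prop :=
  ∀ k1 k2 e, NthMember k1 e cs → NthMember k2 e cs → k1 = k2

/-- `(cs,us,ds)` represents a correct placement of queens `1,…,m`
in the context of row `i` (Definition 3 of the paper):
`cs` is a list of distinct members containing `1,…,m`; the up diagonal
numbers `k+j-i` and down diagonal numbers `k+i-j` of the queens `1,…,m`
(queen `j` being the `k`-th member of `cs`) are pairwise distinct; and every
positive such diagonal number `l` of queen `j` is reflected by `j` being the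
`l`-th member of `us` (resp. `ds`). -/
def CorrectUpTo (m i : ℕ) (cs us ds : Term) : Prop :=
  m ≤ i ∧
  IsList cs ∧ DistinctMembers cs ∧
  (∀ j, 1 ≤ j → j ≤ m → IsMember (num j) cs) ∧
  (∀ j1 j2 k1 k2, 1 ≤ j1 → j1 ≤ m → 1 ≤ j2 → j2 ≤ m →
     NthMember k1 (num j1) cs → NthMember k2 (num j2) cs →
     (k1 + j1 : ℤ) - i = (k2 + j2 : ℤ) - i → j1 = j2) ∧
  (∀ j1 j2 k1 k2, 1 ≤ j1 → j1 ≤ m → 1 ≤ j2 → j2 ≤ m →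
     NthMember k1 (num j1) cs → NthMember k2 (num j2) cs →
     (k1 + i : ℤ) - j1 = (k2 + i : ℤ) - j2 → j1 = j2) ∧
  (∀ j k (l : ℤ), 1 ≤ j → j ≤ m → NthMember k (num j) cs →
     (k + j : ℤ) - i = l → 0 < l → NthMember l.toNat (num j) us) ∧
  (∀ j k (l : ℤ), 1 ≤ j → j ≤ m → NthMember k (num j) cs →
     (k + i : ℤ) - j = l → 0 < l → NthMember l.toNat (num j) ds)

/-- Ground atoms of the n-queens program. -/
inductive Atom : Type
  | pq  (i cs us ds : Term)
  | pqs (i cs us ds : Term)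
deriving DecidableEq

/-- A ground clause: a head together with the list of body atoms. -/
abbrev Clause := Atom × List Atom

/-- A (ground instantiation of a) definite program. -/
abbrev Program := Set Clause

/-- `S` is an Herbrand model of `P`. -/
def IsModel (S : Set Atom) (P : Program) : Prop :=
  ∀ c ∈ P, (∀ b ∈ c.2, b ∈ S) → c.1 ∈ S

/-- The least Herbrand model of `P`. -/
def LHM (P : Program) : Set Atom := ⋂₀ {S | IsModel S P}

/-- A ground atom `A` is covered by program `P` w.r.t. specification `S`. -/
def Covered (P : Program) (S : Set Atom) (A : Atom) : Prop :=
  ∃ c ∈ P, c.1 = A ∧ ∀ b ∈ c.2, b ∈ S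

/-- The set of ground instances of the two pq clauses:
`pq(I,[I|_],[I|_],[I|_])` and `pq(I,[_|Cs],[_|Us],[_|Ds]) ← pq(I,Cs,Us,Ds)`. -/
def PQprog : Program :=
  {c | (∃ i x y z, c = (Atom.pq i (Term.cons i x) (Term.cons i y) (Term.cons i z), [])) ∨
       (∃ i c' cs u us d ds,
          c = (Atom.pq i (Term.cons c' cs) (Term.cons u us) (Term.cons d ds),
               [Atom.pq i cs us ds]))}

/-- The set of ground instances of the four clauses of NQUEENS. -/
def NQprog : Program :=
  {c | (∃ x y z, c = (Atom.pqs Term.zero x y z, [])) ∨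
       (∃ i cs us u d ds,
          c = (Atom.pqs (Term.succ i) cs us (Term.cons d ds),
               [Atom.pqs i cs (Term.cons u us) ds, Atom.pq (Term.succ i) cs us ds])) ∨
       (∃ i x y z, c = (Atom.pq i (Term.cons i x) (Term.cons i y) (Term.cons i z), [])) ∨
       (∃ i c' cs u us d ds,
          c = (Atom.pq i (Term.cons c' cs) (Term.cons u us) (Term.cons d ds),
               [Atom.pq i cs us ds]))}

/-- The specification `S_pq`. -/
def Spq : Set Atom :=
  {a | ∃ i cs us ds k, a = Atom.pq i cs us ds ∧ 0 < k ∧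
       NthMember k i cs ∧ NthMember k i us ∧ NthMember k i ds}

/-- The correctness specification `S_pqs`. -/
def Spqs : Set Atom :=
  {a | (∃ cs us ds, a = Atom.pqs Term.zero cs us ds) ∨
       (∃ i cs us t ds, 0 < i ∧ a = Atom.pqs (num i) cs us (Term.cons t ds) ∧
          (∀ j, 1 ≤ j → j ≤ i → IsMember (num j) cs) ∧
          (IsList cs → DistinctMembers cs → CorrectUpTo i i cs us ds))}

/-- The completeness specification `S⁰_pqs`. -/
def S0pqs : Set Atom :=
  {a | ∃ i cs us t ds, 0 < i ∧ a = Atom.pqs (num i) cs us (Term.cons t ds) ∧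
        CorrectUpTo i i cs us ds}

/-- All atoms `pqs(0,cs,us,ds)`. -/
def SpqsZero : Set Atom :=
  {a | ∃ cs us ds, a = Atom.pqs Term.zero cs us ds}

/-- The level mapping on ground terms: `|[h|t]| = 1+|t|`, `|s(t)| = 1+|t|`,
`|f(…)| = 0` otherwise. -/
def tlvl : Term → ℕ
  | Term.cons _ t => 1 + tlvl t
  | Term.succ t => 1 + tlvl t
  | _ => 0

/-- The level mapping on ground atoms. -/
def alvl : Atom → ℕ
  | Atom.pqs i cs _ _ => tlvl i + tlvl cs
  | Atom.pq _ cs _ _ => tlvl cs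

/-- `t` is a list of length `n`. -/
inductive IsListLen : Term → ℕ → Prop
  | nil : IsListLen Term.nil 0
  | cons (h t : Term) (n : ℕ) : IsListLen t n → IsListLen (Term.cons h t) (n + 1)

lemma num_injective : Function.Injective num := by
  intro a b h
  induction a generalizing b with
  | zero => cases b with
    | zero => rfl
    | succ b => simp [num] at h
  | succ a ih => cases b with
    | zero => simp [num] at h
    | succ b => simp only [num, Term.succ.injEq] at h; exact congrArg Nat.succ (ih h)

/-- Turn a `List Term` into a nil-terminated term. -/
def ofList : List Term → Term := fun L => L.foldr Term.cons Term.nil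

lemma isListLen_toList {cs : Term} {n : ℕ} (h : IsListLen cs n) :
    ∃ L : List Term, cs = ofList L ∧ L.length = n := by
  induction h with
  | nil => exact ⟨[], rfl, rfl⟩
  | cons h t m _ ih =>
      obtain ⟨L, rfl, rfl⟩ := ih
      exact ⟨h :: L, rfl, rfl⟩

lemma nthMember_ofList (L : List Term) (e : Term) :
    ∀ i : ℕ, NthMember (i + 1) e (ofList L) ↔ L[i]? = some e := by
  induction L with
  | nil =>
      intro i
      cases i with
      | zero => simp [NthMember, ofList]
      | succ i => simp only [NthMember, ofList]; simp
  | cons a L ih =>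
      intro i
      cases i with
      | zero =>
          simp only [NthMember, ofList, List.foldr, List.getElem?_cons_zero]
          constructor
          · rintro ⟨r, h⟩
            injection h with h1 h2
            rw [h1]
          · intro h
            injection h with h
            exact ⟨ofList L, by rw [h]; rfl⟩
      | succ i =>
          show (∃ h r, _ ∧ NthMember (i + 1) e r) ↔ _
          rw [List.getElem?_cons_succ]
          constructor
          · rintro ⟨h, r, heq, hm⟩
            injection heq with h1 h2
            rw [← h2] at hm
            exact (ih i).mp hm
          · intro h
            exact ⟨a, ofList L, rfl, (ih i).mpr h⟩

lemma nthMember_iff (L : List Term) (e : Term) (k : ℕ) :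
    NthMember k e (ofList L) ↔ ∃ i, k = i + 1 ∧ L[i]? = some e := by
  cases k with
  | zero =>
      constructor
      · intro h; exact absurd h (by simp [NthMember])
      · rintro ⟨i, h, -⟩; exact absurd h (by omega)
  | succ k =>
      rw [nthMember_ofList]
      constructor
      · intro h; exact ⟨k, rfl, h⟩
      · rintro ⟨i, hk, h⟩
        obtain rfl : k = i := by omega
        exact h

lemma distinctMembers_of_nodup {L : List Term} (h : L.Nodup) :
    DistinctMembers (ofList L) := by
  intro k1 k2 e h1 h2
  obtain ⟨i1, rfl, hg1⟩ := (nthMember_iff L e k1).mp h1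
  obtain ⟨i2, rfl, hg2⟩ := (nthMember_iff L e k2).mp h2
  have hi1 : i1 < L.length := List.getElem?_eq_some_iff.mp hg1 |>.1
  have hi2 : i2 < L.length := List.getElem?_eq_some_iff.mp hg2 |>.1
  have : L.get ⟨i1, hi1⟩ = L.get ⟨i2, hi2⟩ := by
    have e1 : L[i1]? = some (L.get ⟨i1, hi1⟩) := List.getElem?_eq_getElem hi1
    have e2 : L[i2]? = some (L.get ⟨i2, hi2⟩) := List.getElem?_eq_getElem hi2
    rw [e1] at hg1; rw [e2] at hg2
    injection hg1 with hg1; injection hg2 with hg2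
    rw [hg1, hg2]
  have := List.Nodup.get_inj_iff h |>.mp this
  simpa using this

lemma isList_ofList (L : List Term) : IsList (ofList L) := by
  induction L with
  | nil => exact IsList.nil
  | cons a L ih => exact IsList.cons a (ofList L) ih

lemma nodup_of_mem_all {L : List Term} {n : ℕ} (hlen : L.length = n)
    (hmem : ∀ j, 1 ≤ j → j ≤ n → num j ∈ L) : L.Nodup := by
  classical
  have himg : (Finset.Icc 1 n).image num ⊆ L.toFinset := by
    intro x hx
    simp only [Finset.mem_image, Finset.mem_Icc] at hx
    obtain ⟨j, ⟨h1, h2⟩, rfl⟩ := hx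
    exact List.mem_toFinset.mpr (hmem j h1 h2)
  have hcard : n ≤ L.toFinset.card := by
    have := Finset.card_le_card himg
    rwa [Finset.card_image_of_injective _ num_injective, Nat.card_Icc,
      Nat.add_sub_cancel] at this
  have hle : L.toFinset.card ≤ L.length := L.toFinset_card_le
  have : L.toFinset.card = L.length := by omega
  exact Multiset.toFinset_card_eq_card_iff_nodup.mp this

/-- If `pqs(n,cs,us,ds) ∈ S_pqs` with `n > 0` and `cs` a list of length `n`,
then `cs` is a list of the distinct numbers `1,…,n` solving the n queens
problem: the up diagonal numbers `j+k` and down diagonal numbers `k-j` of the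
queens (queen `j` at position `k`) are pairwise distinct. -/
theorem Spqs_list_gives_solution (n : ℕ) (cs us ds : Term)
    (hn : 0 < n) (hlen : IsListLen cs n)
    (hS : Atom.pqs (num n) cs us ds ∈ Spqs) :
    (∀ j, 1 ≤ j → j ≤ n → IsMember (num j) cs) ∧
    DistinctMembers cs ∧
    (∀ j1 j2 k1 k2, 1 ≤ j1 → j1 ≤ n → 1 ≤ j2 → j2 ≤ n →
       NthMember k1 (num j1) cs → NthMember k2 (num j2) cs →
       j1 ≠ j2 → (j1 + k1 : ℤ) ≠ (j2 + k2 : ℤ)) ∧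
    (∀ j1 j2 k1 k2, 1 ≤ j1 → j1 ≤ n → 1 ≤ j2 → j2 ≤ n →
       NthMember k1 (num j1) cs → NthMember k2 (num j2) cs →
       j1 ≠ j2 → (k1 - j1 : ℤ) ≠ (k2 - j2 : ℤ)) := by
  rcases hS with ⟨cs', us', ds', habs⟩ | ⟨i, cs', us', t, ds', hi, heq, hmem, hcorr⟩
  · exfalso
    injection habs with h1
    cases n with
    | zero => exact Nat.lt_irrefl 0 hn
    | succ n => exact Term.noConfusion h1
  · injection heq with h1 h2 h3 h4
    obtain rfl : i = n := num_injective h1.symm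
    subst h2; subst h3
    obtain ⟨L, rfl, hLlen⟩ := isListLen_toList hlen
    have hmemL : ∀ j, 1 ≤ j → j ≤ i → num j ∈ L := by
      intro j hj1 hj2
      obtain ⟨k, hk⟩ := hmem j hj1 hj2
      obtain ⟨idx, rfl, hg⟩ := (nthMember_iff L (num j) k).mp hk
      exact List.mem_of_getElem? hg
    have hnodup := nodup_of_mem_all hLlen hmemL
    have hdist := distinctMembers_of_nodup hnodup
    have hlist := isList_ofList L
    obtain ⟨-, -, -, -, hup, hdown, -, -⟩ := hcorr hlist hdist
    refine ⟨hmem, hdist, ?_, ?_⟩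
    · intro j1 j2 k1 k2 h1 h2 h3 h4 hk1 hk2 hne habs
      exact hne (hup j1 j2 k1 k2 h1 h2 h3 h4 hk1 hk2 (by omega))
    · intro j1 j2 k1 k2 h1 h2 h3 h4 hk1 hk2 hne habs
      exact hne (hdown j1 j2 k1 k2 h1 h2 h3 h4 hk1 hk2 (by omega))
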